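/- Let V be a finite type and P : Matrix V V ℝ a row-stochastic matrix (not necessarily an absorbing chain), with Abs its set of absorbing states and D its set of dead states. Then for every subset A ⊆ Abs there exists a unique function x : V → ℝ such that (i) x a = 1 for every a ∈ A, (ii) x a = 0 for every a ∈ Abs \ A, (iii) x d = 0 for every d ∈ D, and (iv) x v = ∑ w, P v w * x w for every v ∉ Abs ∪ D. -/

import Mathlib

lemma pow_nonneg_entries {V : Type*} [Fintype V] [DecidableEq V]
    (P : Matrix V V ℝ) (hnonneg : ∀ v w, 0 ≤ P v w) :
    ∀ n v w, 0 ≤ (P ^ n) v w := by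
  intro n
  induction n with
  | zero => intro v w; simp [Matrix.one_apply]; split <;> norm_num
  | succ n ih =>
      intro v w
      rw [pow_succ]
      exact Finset.sum_nonneg fun u _ => mul_nonneg (ih v u) (hnonneg u w)

lemma absorb_max_principle {V : Type*} [Fintype V] [DecidableEq V]
    (P : Matrix V V ℝ)
    (hnonneg : ∀ v w, 0 ≤ P v w)
    (hrow : ∀ v, ∑ w, P v w = 1)
    (B : Set V)
    (habs : ∀ a, P a a = 1 → a ∈ B)
    (hreach : ∀ v, v ∉ B → ∃ n a, P a a = 1 ∧ 0 < (P ^ n) v a)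
    (x : V → ℝ)
    (hzero : ∀ v ∈ B, x v = 0)
    (hflow : ∀ v, v ∉ B → x v = ∑ w, P v w * x w)
    (v : V) : x v ≤ 0 := by
  by_contra h
  push_neg at h
  have hne : (Finset.univ : Finset V).Nonempty := ⟨v, Finset.mem_univ v⟩
  obtain ⟨v₀, -, hmax⟩ := Finset.exists_max_image Finset.univ x hne
  have hmax' : ∀ w, x w ≤ x v₀ := fun w => hmax w (Finset.mem_univ w)
  set M := x v₀ with hM
  have hMpos : 0 < M := lt_of_lt_of_le h (hmax' v)
  -- step lemma
  have step : ∀ w, x w = M → ∀ u, 0 < P w u → x u = M := by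
    intro w hw u hu
    have hwB : w ∉ B := by
      intro hwB
      have := hzero w hwB
      rw [hw] at this
      exact absurd this (ne_of_gt hMpos)
    have hfl := hflow w hwB
    have hsum : ∑ u, P w u * (M - x u) = 0 := by
      have : ∑ u, P w u * (M - x u) = (∑ u, P w u) * M - ∑ u, P w u * x u := by
        rw [Finset.sum_mul]
        rw [← Finset.sum_sub_distrib]
        congr 1; ext u; ring
      rw [this, hrow, ← hfl, hw]; ring
    have hterm : ∀ u ∈ Finset.univ, 0 ≤ P w u * (M - x u) := fun u _ =>
      mul_nonneg (hnonneg w u) (sub_nonneg.mpr (hmax' u))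
    have := (Finset.sum_eq_zero_iff_of_nonneg hterm).mp hsum u (Finset.mem_univ u)
    rcases mul_eq_zero.mp this with h1 | h1
    · exact absurd h1 (ne_of_gt hu)
    · linarith [sub_eq_zero.mp h1]
  have prop : ∀ n w, 0 < (P ^ n) v₀ w → x w = M := by
    intro n
    induction n with
    | zero =>
        intro w hw
        simp only [pow_zero, Matrix.one_apply] at hw
        by_cases hvw : v₀ = w
        · rw [← hvw]
        · simp [hvw] at hw
    | succ n ih =>
        intro w hw
        rw [pow_succ] at hw
        have : ∃ u, 0 < (P ^ n) v₀ u * P u w := by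
          by_contra hc
          push_neg at hc
          have : ∑ u, (P ^ n) v₀ u * P u w ≤ 0 := Finset.sum_nonpos fun u _ => hc u
          exact absurd hw (not_lt.mpr this)
        obtain ⟨u, hu⟩ := this
        have h1 : 0 < (P ^ n) v₀ u := by
          rcases (mul_pos_iff.mp hu) with ⟨a, b⟩ | ⟨a, b⟩
          · exact a
          · exact absurd b (not_lt.mpr (hnonneg u w))
        have h2 : 0 < P u w := by
          rcases (mul_pos_iff.mp hu) with ⟨a, b⟩ | ⟨a, b⟩
          · exact b
          · exact absurd a (not_lt.mpr (pow_nonneg_entries P hnonneg n v₀ u))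
        exact step u (ih u h1) w h2
  have hv₀B : v₀ ∉ B := by
    intro hB
    have := hzero v₀ hB
    rw [← hM] at this
    exact absurd this (ne_of_gt hMpos)
  obtain ⟨n, a, ha1, ha2⟩ := hreach v₀ hv₀B
  have e1 : x a = M := prop n a ha2
  have e2 : x a = 0 := hzero a (habs a ha1)
  linarith

open Matrix in
/-- **Absorption equations with livelocks: existence and uniqueness.**
For a row-stochastic matrix `P` with absorbing states `Abs` and dead
(livelock) states `D`, for every target set `A ⊆ Abs` there is a unique
`x : V → ℝ` with `x = 1` on `A`, `x = 0` on `Abs \ A` and on `D`, and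
satisfying the flow equations on all remaining states. -/
theorem stochastic_matrix_exists_unique_absorption_vector_with_dead
    {V : Type*} [Fintype V] [DecidableEq V]
    (P : Matrix V V ℝ)
    (hnonneg : ∀ v w, 0 ≤ P v w)
    (hrow : ∀ v, ∑ w, P v w = 1)
    (Abs : Set V) (hAbs : Abs = {a : V | P a a = 1})
    (D : Set V)
    (hD : D = {v : V | v ∉ Abs ∧ ¬ ∃ (n : ℕ) (a : V), a ∈ Abs ∧ 0 < (P ^ n) v a})
    (A : Set V) (hA : A ⊆ Abs) :
    ∃! x : V → ℝ,
      (∀ a ∈ A, x a = 1) ∧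
      (∀ a ∈ Abs \ A, x a = 0) ∧
      (∀ d ∈ D, x d = 0) ∧
      (∀ v ∉ Abs ∪ D, x v = ∑ w, P v w * x w) := by
  classical
  set B : Set V := Abs ∪ D with hB
  have habs : ∀ a, P a a = 1 → a ∈ B := fun a ha => Or.inl (hAbs ▸ ha)
  have hreach : ∀ v, v ∉ B → ∃ n a, P a a = 1 ∧ 0 < (P ^ n) v a := by
    intro v hv
    rw [hB, Set.mem_union, not_or] at hv
    obtain ⟨hv1, hv2⟩ := hv
    rw [hD, Set.mem_setOf_eq] at hv2
    push_neg at hv2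
    obtain ⟨n, a, ha1, ha2⟩ := hv2 hv1
    rw [hAbs] at ha1
    exact ⟨n, a, ha1, ha2⟩
  -- the matrix of the linear system
  set Q : Matrix V V ℝ := fun v w => if v ∈ B then 0 else P v w with hQ
  set L : Matrix V V ℝ := 1 - Q with hL
  have hLapp : ∀ (x : V → ℝ) v,
      (L *ᵥ x) v = x v - (if v ∈ B then 0 else ∑ w, P v w * x w) := by
    intro x v
    rw [hL, Matrix.sub_mulVec, Matrix.one_mulVec]
    simp only [Pi.sub_apply]
    congr 1
    rw [Matrix.mulVec, dotProduct]
    by_cases h : v ∈ B <;> simp [hQ, h]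
  -- injectivity of the system
  have hker : ∀ x : V → ℝ, L *ᵥ x = 0 → x = 0 := by
    intro x hx
    have hzero : ∀ v ∈ B, x v = 0 := by
      intro v hv
      have := congrFun hx v
      rw [hLapp] at this
      simp [hv] at this
      simpa using this
    have hflow : ∀ v, v ∉ B → x v = ∑ w, P v w * x w := by
      intro v hv
      have := congrFun hx v
      rw [hLapp] at this
      simp [hv] at this
      linarith [this]
    have h1 := absorb_max_principle P hnonneg hrow B habs hreach x hzero hflow
    have h2 := absorb_max_principle P hnonneg hrow B habs hreach (-x)
      (by intro v hv; simp [hzero v hv])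
      (by intro v hv
          simp only [Pi.neg_apply, mul_neg]
          rw [Finset.sum_neg_distrib, ← hflow v hv])
    funext v
    have := h2 v
    simp only [Pi.neg_apply, neg_nonpos] at this
    have := h1 v
    simp only [Pi.zero_apply]
    have := h2 v
    simp only [Pi.neg_apply] at this
    linarith [h1 v, this]
  have hinj : Function.Injective L.mulVecLin := by
    rw [injective_iff_map_eq_zero]
    intro x hx
    exact hker x hx
  have hsurj : Function.Surjective L.mulVecLin :=
    (LinearMap.injective_iff_surjective).mp hinj
  set b : V → ℝ := fun v => if v ∈ A then 1 else 0 with hb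
  obtain ⟨x, hx⟩ := hsurj b
  have hxL : L *ᵥ x = b := hx
  -- basic disjointness facts
  have hDnA : ∀ d ∈ D, d ∉ A := by
    intro d hd hdA
    rw [hD, Set.mem_setOf_eq] at hd
    exact hd.1 (hA hdA)
  have hsat : ∀ y : V → ℝ,
      ((∀ a ∈ A, y a = 1) ∧ (∀ a ∈ Abs \ A, y a = 0) ∧ (∀ d ∈ D, y d = 0) ∧
        (∀ v ∉ Abs ∪ D, y v = ∑ w, P v w * y w)) → L *ᵥ y = b := by
    intro y ⟨c1, c2, c3, c4⟩
    funext v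
    rw [hLapp]
    by_cases hvB : v ∈ B
    · simp only [hvB, if_true, sub_zero]
      rcases hvB with hvAbs | hvD
      · by_cases hvA : v ∈ A
        · rw [c1 v hvA, hb]; simp [hvA]
        · rw [c2 v ⟨hvAbs, hvA⟩, hb]; simp [hvA]
      · rw [c3 v hvD, hb]; simp [hDnA v hvD]
    · simp only [hvB, if_false]
      have hvA : v ∉ A := fun h => hvB (Or.inl (hA h))
      rw [← c4 v hvB, hb]
      simp [hvA]
  have hxsat : (∀ a ∈ A, x a = 1) ∧ (∀ a ∈ Abs \ A, x a = 0) ∧ (∀ d ∈ D, x d = 0) ∧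
      (∀ v ∉ Abs ∪ D, x v = ∑ w, P v w * x w) := by
    refine ⟨?_, ?_, ?_, ?_⟩
    · intro a ha
      have hv := congrFun hxL a
      rw [hLapp] at hv
      have haB : a ∈ B := Or.inl (hA ha)
      simp only [haB, if_true, sub_zero, hb] at hv
      simpa [ha] using hv
    · intro a ⟨ha1, ha2⟩
      have hv := congrFun hxL a
      rw [hLapp] at hv
      have haB : a ∈ B := Or.inl ha1
      simp only [haB, if_true, sub_zero, hb] at hv
      simpa [ha2] using hv
    · intro d hd
      have hv := congrFun hxL d
      rw [hLapp] at hv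
      have hdB : d ∈ B := Or.inr hd
      simp only [hdB, if_true, sub_zero, hb] at hv
      simpa [hDnA d hd] using hv
    · intro v hv
      have hveq := congrFun hxL v
      rw [hLapp] at hveq
      have hvA : v ∉ A := fun h => hv (Or.inl (hA h))
      simp only [show v ∉ B from hv, if_false, hb, hvA] at hveq
      linarith [hveq]
  refine ⟨x, hxsat, ?_⟩
  intro y hy
  have h1 : L *ᵥ y = b := hsat y hy
  have h2 : L *ᵥ x = b := hxL
  have : L.mulVecLin y = L.mulVecLin x := by
    simp only [Matrix.mulVecLin_apply]
    rw [h1, h2]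
  exact hinj this
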